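/- Let X be a symmetric n×n matrix whose entries all lie in {0, −1, 1}. Then X is positive semidefinite if and only if there exist an integer r ≥ 0 and vectors x_1, …, x_r, each with all entries in {0, −1, 1}, such that X = Σ_{i=1}^r x_i x_iᵀ. -/

import Mathlib

open Matrix

section Aux

variable {n : ℕ} {X : Matrix (Fin n) (Fin n) ℝ}

lemma quad3 (X : Matrix (Fin n) (Fin n) ℝ) (i j k : Fin n) (a b c : ℝ) :
    ((a • (Pi.single i 1 : Fin n → ℝ) + b • (Pi.single j 1 : Fin n → ℝ)
        + c • (Pi.single k 1 : Fin n → ℝ)) ⬝ᵥ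
      (X *ᵥ (a • (Pi.single i 1 : Fin n → ℝ) + b • (Pi.single j 1 : Fin n → ℝ)
        + c • (Pi.single k 1 : Fin n → ℝ)))) =
    a*a*X i i + a*b*X i j + a*c*X i k + b*a*X j i + b*b*X j j + b*c*X j k
      + c*a*X k i + c*b*X k j + c*c*X k k := by
  simp [mulVec_add, mulVec_smul, mulVec_single, add_dotProduct, dotProduct_add,
    smul_dotProduct, dotProduct_smul, single_dotProduct, dotProduct_single]
  ring

lemma quadnn (hpsd : X.PosSemidef) (y : Fin n → ℝ) : 0 ≤ y ⬝ᵥ X *ᵥ y := by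
  simpa using hpsd.dotProduct_mulVec_nonneg y


lemma quad3nn (hpsd : X.PosSemidef) (i j k : Fin n) (a b c : ℝ) :
    0 ≤ a*a*X i i + a*b*X i j + a*c*X i k + b*a*X j i + b*b*X j j + b*c*X j k
      + c*a*X k i + c*b*X k j + c*c*X k k := by
  rw [← quad3 X i j k a b c]
  exact quadnn hpsd _

variable (hsymm : X.IsSymm)
  (hternary : ∀ i j, X i j = 0 ∨ X i j = -1 ∨ X i j = 1)
  (hpsd : X.PosSemidef)

include hternary in
lemma sq_one {i j : Fin n} (h : X i j ≠ 0) : X i j * X i j = 1 := by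
  rcases hternary i j with h' | h' | h' <;> simp [h'] at h ⊢

include hternary hpsd in
lemma diag01 (i : Fin n) : X i i = 0 ∨ X i i = 1 := by
  have h0 : 0 ≤ X i i := by
    have := quad3nn hpsd i i i 1 0 0
    linarith
  rcases hternary i i with h | h | h
  · exact Or.inl h
  · linarith
  · exact Or.inr h

include hsymm hternary hpsd in
lemma diag_one {i j : Fin n} (h : X i j ≠ 0) : X i i = 1 := by
  rcases diag01 hternary hpsd i with h0 | h1
  · by_cases hij : i = j
    · exact absurd (hij ▸ h0) h
    exfalso
    have hF := quad3nn hpsd i j j (-X i j) 1 0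
    have hji : X j i = X i j := hsymm.apply i j
    have hs : X i j * X i j = 1 := sq_one hternary h
    have hjj : X j j ≤ 1 := by
      rcases diag01 hternary hpsd j with h' | h' <;> rw [h'] <;> norm_num
    rw [h0, hji] at hF
    nlinarith
  · exact h1

include hsymm hternary hpsd in
lemma key {i j k : Fin n} (hij : X i j ≠ 0) (hjk : X j k ≠ 0) :
    X i k = X i j * X j k := by
  have hji : X j i = X i j := hsymm.apply i j
  have hkj : X k j = X j k := hsymm.apply j k
  have hki : X k i = X i k := hsymm.apply i k
  by_cases h1 : i = j
  · subst h1
    rw [diag_one hsymm hternary hpsd hij, one_mul]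
  · by_cases h2 : j = k
    · subst h2
      rw [← hkj, diag_one hsymm hternary hpsd (hkj ▸ hjk : X j j ≠ 0)]
      ring
    · by_cases h3 : i = k
      · subst h3
        rw [hji, sq_one hternary hij, diag_one hsymm hternary hpsd hij]
      · have hF := quad3nn hpsd i j k (X i j) (-1) (X j k)
        have hii := diag_one hsymm hternary hpsd hij
        have hjj := diag_one hsymm hternary hpsd hjk
        have hkk := diag_one hsymm hternary hpsd (hkj ▸ hjk : X k j ≠ 0)
        rw [hii, hjj, hkk, hji, hkj, hki] at hF
        rcases hternary i j with h | h | h <;> rcases hternary j k with h' | h' | h' <;>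
          rcases hternary i k with h'' | h'' | h'' <;>
          first
          | exact absurd h hij
          | exact absurd h' hjk
          | (rw [h, h', h''] at hF ⊢ <;> norm_num at hF <;> norm_num)

end Aux

theorem stmt_0 (n : ℕ) (X : Matrix (Fin n) (Fin n) ℝ)
    (hsymm : X.IsSymm)
    (hternary : ∀ i j, X i j = 0 ∨ X i j = -1 ∨ X i j = 1) :
    X.PosSemidef ↔
      ∃ (r : ℕ) (x : Fin r → Fin n → ℝ),
        (∀ i k, x i k = 0 ∨ x i k = -1 ∨ x i k = 1) ∧
        X = ∑ i, vecMulVec (x i) (x i) := by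
  classical
  constructor
  · intro hpsd
    refine ⟨n, fun i => if X i i = 1 ∧ ∀ m, m < i → X i m = 0 then X i else 0, ?_, ?_⟩
    · intro i k
      beta_reduce
      by_cases hP : X i i = 1 ∧ ∀ m, m < i → X i m = 0
      · rw [if_pos hP]
        exact hternary i k
      · rw [if_neg hP]
        exact Or.inl rfl
    · ext j k
      rw [Matrix.sum_apply]
      simp only [vecMulVec_apply]
      beta_reduce
      by_cases hjk : X j k = 0
      · rw [hjk]
        refine (Finset.sum_eq_zero fun i _ => ?_).symm
        by_cases hP : X i i = 1 ∧ ∀ m, m < i → X i m = 0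
        · rw [if_pos hP]
          by_cases hij : X i j = 0
          · rw [hij, zero_mul]
          · have hik : X i k = 0 := by
              by_contra hik
              have hji : X j i ≠ 0 := by rw [hsymm.apply i j]; exact hij
              have heq := key hsymm hternary hpsd hji hik
              rw [heq] at hjk
              exact mul_ne_zero hji hik hjk
            rw [hik, mul_zero]
        · rw [if_neg hP]
          exact zero_mul _
      · -- X j k ≠ 0
        obtain ⟨i₀, hi₀mem, hi₀min⟩ := Finset.exists_min_image
          (Finset.univ.filter (fun i => X i j ≠ 0)) id
          ⟨j, by simp [Finset.mem_filter, diag_one hsymm hternary hpsd hjk]⟩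
        simp only [Finset.mem_filter, Finset.mem_univ, true_and] at hi₀mem
        have hi₀min' : ∀ m, X m j ≠ 0 → i₀ ≤ m := fun m hm =>
          hi₀min m (by simp [Finset.mem_filter, hm])
        have hP₀ : X i₀ i₀ = 1 ∧ ∀ m, m < i₀ → X i₀ m = 0 := by
          refine ⟨diag_one hsymm hternary hpsd hi₀mem, fun m hm => ?_⟩
          by_contra hne
          have hmi : X m i₀ ≠ 0 := by rw [hsymm.apply i₀ m]; exact hne
          have : X m j = X m i₀ * X i₀ j := key hsymm hternary hpsd hmi hi₀mem
          have hmj : X m j ≠ 0 := by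
            rw [this]; exact mul_ne_zero hmi hi₀mem
          exact absurd (hi₀min' m hmj) (not_le.mpr hm)
        rw [Finset.sum_eq_single i₀]
        · rw [if_pos hP₀]
          have hik : X i₀ k = X i₀ j * X j k := key hsymm hternary hpsd hi₀mem hjk
          rw [hik, ← mul_assoc, sq_one hternary hi₀mem, one_mul]
        · intro i _ hne
          by_cases hP : X i i = 1 ∧ ∀ m, m < i → X i m = 0
          · rw [if_pos hP]
            have hij : X i j = 0 := by
              by_contra hij
              have hii₀ : X i i₀ ≠ 0 := by
                have hji₀ : X j i₀ ≠ 0 := by rw [hsymm.apply i₀ j]; exact hi₀mem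
                have : X i i₀ = X i j * X j i₀ := key hsymm hternary hpsd hij hji₀
                rw [this]; exact mul_ne_zero hij hji₀
              rcases lt_trichotomy i i₀ with h | h | h
              · exact absurd (hi₀min' i hij) (not_le.mpr h)
              · exact hne h
              · exact hii₀ (hP.2 i₀ h)
            rw [hij, zero_mul]
          · rw [if_neg hP]
            exact zero_mul _
        · intro h
          exact absurd (Finset.mem_univ i₀) h
  · rintro ⟨r, x, hx, rfl⟩
    rw [posSemidef_iff_dotProduct_mulVec]
    constructor
    · rw [Matrix.IsHermitian, conjTranspose_eq_transpose_of_trivial, ← Matrix.IsSymm]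
      exact hsymm
    · intro y
      rw [star_trivial]
      calc (0:ℝ) ≤ ∑ i, (x i ⬝ᵥ y) ^ 2 := Finset.sum_nonneg fun i _ => sq_nonneg _
        _ = y ⬝ᵥ (∑ i, vecMulVec (x i) (x i)) *ᵥ y := by
            simp only [dotProduct, mulVec, Matrix.sum_apply, vecMulVec_apply, sq,
              Finset.sum_mul, Finset.mul_sum]
            rw [Finset.sum_comm]
            refine Finset.sum_congr rfl fun a _ => ?_
            rw [Finset.sum_comm]
            exact Finset.sum_congr rfl fun b _ => Finset.sum_congr rfl fun i _ => by ring
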